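/- Let G be a graph, e = (u,v) an edge of G, and G* the graph obtained from G by subdividing e with a new vertex w. Then mp(G*) ≥ ⌈(mp(G)+1)/2⌉. -/

import Mathlib

open SimpleGraph

/-- `mp G` is the maximum number of vertices of a degree monotone path in `G`. -/
noncomputable def mp {V : Type*} [Fintype V] (G : SimpleGraph V) : ℕ :=
  letI : DecidableEq V := Classical.decEq _
  letI : DecidableRel G.Adj := Classical.decRel _
  sSup {n : ℕ | ∃ (u v : V) (p : G.Walk u v), p.IsPath ∧
    (List.Chain' (· ≤ ·) (p.support.map (fun x => G.degree x)) ∨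
     List.Chain' (· ≥ ·) (p.support.map (fun x => G.degree x))) ∧ p.support.length = n}

/-- The graph obtained from `G` by subdividing the edge `uv` with a new vertex `none`. -/
def subdivide {V : Type*} (G : SimpleGraph V) (u v : V) : SimpleGraph (Option V) :=
  SimpleGraph.fromRel (fun a b =>
    (∃ x y, a = some x ∧ b = some y ∧ G.Adj x y ∧ ¬(x = u ∧ y = v) ∧ ¬(x = v ∧ y = u)) ∨
    (a = none ∧ (b = some u ∨ b = some v)))

/-- Degree function computed with classical instances, matching `mp`'s definition. -/
noncomputable def degC {W : Type*} [Fintype W] (H : SimpleGraph W) : W → ℕ :=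
  letI : DecidableEq W := Classical.decEq _
  letI : DecidableRel H.Adj := Classical.decRel _
  fun x => H.degree x

/-- The set whose supremum is `mp`. -/
noncomputable def mpSet {W : Type*} [Fintype W] (H : SimpleGraph W) : Set ℕ :=
  {n : ℕ | ∃ (x y : W) (p : H.Walk x y), p.IsPath ∧
    (List.Chain' (· ≤ ·) (p.support.map (degC H)) ∨
     List.Chain' (· ≥ ·) (p.support.map (degC H))) ∧ p.support.length = n}

lemma mp_eq_sSup {W : Type*} [Fintype W] (H : SimpleGraph W) : mp H = sSup (mpSet H) := rfl

lemma bddAbove_mpSet {W : Type*} [Fintype W] (H : SimpleGraph W) : BddAbove (mpSet H) := by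
  refine ⟨Fintype.card W, ?_⟩
  rintro n ⟨x, y, p, hp, _, rfl⟩
  exact hp.support_nodup.length_le_card

lemma le_mp {W : Type*} [Fintype W] (H : SimpleGraph W) {x y : W} (p : H.Walk x y)
    (hp : p.IsPath)
    (hc : List.Chain' (· ≤ ·) (p.support.map (degC H)) ∨
          List.Chain' (· ≥ ·) (p.support.map (degC H))) :
    p.support.length ≤ mp H := by
  rw [mp_eq_sSup]
  exact le_csSup (bddAbove_mpSet H) ⟨x, y, p, hp, hc, rfl⟩

section Aux

variable {V : Type*} {G : SimpleGraph V} {u v : V}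

lemma subdivide_adj_some {x y : V} :
    (subdivide G u v).Adj (some x) (some y) ↔
      G.Adj x y ∧ ¬(x = u ∧ y = v) ∧ ¬(x = v ∧ y = u) := by
  constructor
  · rintro ⟨hne, (⟨a, b, ha, hb, h1, h2, h3⟩ | ⟨h, _⟩) | (⟨a, b, ha, hb, h1, h2, h3⟩ | ⟨h, _⟩)⟩
    · cases ha; cases hb
      exact ⟨h1, h2, h3⟩
    · exact absurd h (by simp)
    · cases ha; cases hb
      exact ⟨h1.symm, fun ⟨e1, e2⟩ => h3 ⟨e2, e1⟩, fun ⟨e1, e2⟩ => h2 ⟨e2, e1⟩⟩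
    · exact absurd h (by simp)
  · rintro ⟨h1, h2, h3⟩
    exact ⟨by simpa using h1.ne, Or.inl (Or.inl ⟨x, y, rfl, rfl, h1, h2, h3⟩)⟩

lemma subdivide_adj_none {x : V} (huv : u ≠ v) :
    (subdivide G u v).Adj none (some x) ↔ (x = u ∨ x = v) := by
  constructor
  · rintro ⟨hne, (⟨a, b, ha, hb, h1, h2, h3⟩ | ⟨h, hx⟩) | (⟨a, b, ha, hb, h1, h2, h3⟩ | ⟨h, hx⟩)⟩
    · exact absurd ha (by simp)
    · rcases hx with hx | hx <;> simp_all
    · exact absurd hb (by simp)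
    · simp at h
  · rintro (rfl | rfl)
    · exact ⟨by simp, Or.inl (Or.inr ⟨rfl, Or.inl rfl⟩)⟩
    · exact ⟨by simp, Or.inl (Or.inr ⟨rfl, Or.inr rfl⟩)⟩

lemma subdivide_not_adj_none_none : ¬ (subdivide G u v).Adj none none := by
  simp [subdivide]

lemma subdivide_adj_of_ne {x y : V} (h : G.Adj x y) (hne : s(x, y) ≠ s(u, v)) :
    (subdivide G u v).Adj (some x) (some y) := by
  simp only [Ne, Sym2.eq_iff] at hne
  push_neg at hne
  exact subdivide_adj_some.mpr ⟨h, fun hp => (hne.1 hp.1) hp.2, fun hp => (hne.2 hp.1) hp.2⟩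

/-- Lift a walk avoiding the edge `s(u,v)` to the subdivision. -/
def liftWalk : ∀ {x y : V} (p : G.Walk x y), s(u, v) ∉ p.edges →
    (subdivide G u v).Walk (some x) (some y)
  | _, _, Walk.nil, _ => Walk.nil
  | _, _, Walk.cons h q, hp =>
      Walk.cons (subdivide_adj_of_ne h
        (fun hc => hp (by rw [← hc]; exact List.mem_cons_self)))
      (liftWalk q (fun hc => hp (List.mem_cons_of_mem _ hc)))

lemma support_liftWalk : ∀ {x y : V} (p : G.Walk x y) (hp : s(u, v) ∉ p.edges),
    (liftWalk p hp).support = p.support.map some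
  | _, _, Walk.nil, _ => rfl
  | _, _, Walk.cons h q, hp => by
      rw [liftWalk]
      rw [Walk.support_cons, Walk.support_cons, List.map_cons, support_liftWalk q _]

lemma isPath_liftWalk {x y : V} (p : G.Walk x y) (hp : s(u, v) ∉ p.edges)
    (h : p.IsPath) : (liftWalk p hp).IsPath := by
  rw [Walk.isPath_def, support_liftWalk]
  exact (Walk.isPath_def _ |>.mp h).map (Option.some_injective V)

/-- Split a path at a dart. -/
lemma split_at_dart {x y : V} (p : G.Walk x y) (hp : p.IsPath) {d : G.Dart}
    (hd : d ∈ p.darts) :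
    ∃ (q1 : G.Walk x d.fst) (q2 : G.Walk d.snd y),
      p.support = q1.support ++ q2.support ∧ q1.IsPath ∧ q2.IsPath ∧
      s(d.fst, d.snd) ∉ q1.edges ∧ s(d.fst, d.snd) ∉ q2.edges := by
  induction p with
  | nil => simp at hd
  | @cons a b c h q ih =>
    rw [Walk.darts_cons, List.mem_cons] at hd
    rw [Walk.cons_isPath_iff] at hp
    rcases hd with hd | hd
    · subst hd
      refine ⟨Walk.nil, q, ?_, Walk.IsPath.nil, hp.1, by simp, ?_⟩
      · simp [Walk.support_cons]
      · intro hmem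
        exact hp.2 (q.fst_mem_support_of_mem_edges hmem)
    · obtain ⟨q1, q2, hsupp, hq1, hq2, he1, he2⟩ := ih hp.1 hd
      have hfst : d.fst ∈ q.support := q.dart_fst_mem_support_of_mem_darts hd
      have hsnd : d.snd ∈ q.support := q.dart_snd_mem_support_of_mem_darts hd
      refine ⟨Walk.cons h q1, q2, ?_, ?_, hq2, ?_, he2⟩
      · rw [Walk.support_cons, Walk.support_cons, hsupp, List.cons_append]
      · rw [Walk.cons_isPath_iff]
        exact ⟨hq1, fun hmem => hp.2 (by rw [hsupp]; exact List.mem_append_left _ hmem)⟩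
      · rw [Walk.edges_cons, List.mem_cons]
        rintro (hc | hc)
        · rw [Sym2.eq_iff] at hc
          rcases hc with ⟨h1, h2⟩ | ⟨h1, h2⟩
          · exact hp.2 (h1 ▸ hfst)
          · exact hp.2 (h2 ▸ hsnd)
        · exact he1 hc

lemma rel_of_dart_of_chain {α : Type*} {R : α → α → Prop} {f : V → α} :
    ∀ {x y : V} (p : G.Walk x y), List.Chain' R (p.support.map f) →
    ∀ d ∈ p.darts, R (f d.fst) (f d.snd)
  | _, _, Walk.nil, _, d, hd => by simp at hd
  | _, _, Walk.cons h q, hc, d, hd => by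
    rw [Walk.support_cons, List.map_cons, List.Chain', List.isChain_cons] at hc
    rw [Walk.darts_cons, List.mem_cons] at hd
    rcases hd with rfl | hd
    · exact hc.1 _ (by rw [q.support_eq_cons]; simp; exact ⟨_, by rw [q.support_eq_cons]; rfl, rfl⟩)
    · exact rel_of_dart_of_chain q hc.2 d hd

end Aux

section Deg

variable {V : Type*} {G : SimpleGraph V} {u v : V}
variable [Fintype V] [DecidableEq V] [DecidableRel G.Adj]
  [DecidableRel (subdivide G u v).Adj] (he : G.Adj u v)

include he

lemma subdivide_degree_some (x : V) :
    (subdivide G u v).degree (some x) = G.degree x := by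
  have huv : u ≠ v := he.ne
  by_cases hxu : x = u
  · subst hxu
    have hnfs : (subdivide G x v).neighborFinset (some x)
        = insert none (((G.neighborFinset x).erase v).image some) := by
      ext a
      cases a with
      | none => simp [(subdivide G x v).adj_comm, subdivide_adj_none huv]
      | some y =>
        simp only [mem_neighborFinset, subdivide_adj_some, Finset.mem_insert,
          Finset.mem_image, Finset.mem_erase, mem_neighborFinset, Option.some.injEq]
        constructor
        · rintro ⟨h1, h2, h3⟩
          exact Or.inr ⟨y, ⟨fun hy => h2 ⟨by trivial, hy⟩, h1⟩, rfl⟩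
        · rintro (h | ⟨z, ⟨hz1, hz2⟩, rfl⟩)
          · exact absurd h (by simp)
          · exact ⟨hz2, fun hp => hz1 hp.2, fun hp => huv hp.1⟩
    have hv : v ∈ G.neighborFinset x := by simpa using he
    have hpos : 1 ≤ (G.neighborFinset x).card := Finset.card_pos.mpr ⟨v, hv⟩
    rw [degree, hnfs, Finset.card_insert_of_notMem (by simp),
      Finset.card_image_of_injective _ (Option.some_injective V),
      Finset.card_erase_of_mem hv, degree]
    omega
  · by_cases hxv : x = v
    · subst hxv
      have hnfs : (subdivide G u x).neighborFinset (some x)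
          = insert none (((G.neighborFinset x).erase u).image some) := by
        ext a
        cases a with
        | none => simp [(subdivide G u x).adj_comm, subdivide_adj_none huv]
        | some y =>
          simp only [mem_neighborFinset, subdivide_adj_some, Finset.mem_insert,
            Finset.mem_image, Finset.mem_erase, mem_neighborFinset, Option.some.injEq]
          constructor
          · rintro ⟨h1, h2, h3⟩
            exact Or.inr ⟨y, ⟨fun hy => h3 ⟨by trivial, hy⟩, h1⟩, rfl⟩
          · rintro (h | ⟨z, ⟨hz1, hz2⟩, rfl⟩)
            · exact absurd h (by simp)
            · exact ⟨hz2, fun hp => huv hp.1.symm, fun hp => hz1 hp.2⟩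
      have hu : u ∈ G.neighborFinset x := by simpa using he.symm
      have hpos : 1 ≤ (G.neighborFinset x).card := Finset.card_pos.mpr ⟨u, hu⟩
      rw [degree, hnfs, Finset.card_insert_of_notMem (by simp),
        Finset.card_image_of_injective _ (Option.some_injective V),
        Finset.card_erase_of_mem hu, degree]
      omega
    · have hnfs : (subdivide G u v).neighborFinset (some x)
          = (G.neighborFinset x).image some := by
        ext a
        cases a with
        | none =>
          simp only [mem_neighborFinset, (subdivide G u v).adj_comm,
            subdivide_adj_none huv]
          simp [hxu, hxv]
        | some y =>
          simp only [mem_neighborFinset, subdivide_adj_some, Finset.mem_image,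
            mem_neighborFinset, Option.some.injEq]
          constructor
          · rintro ⟨h1, _, _⟩
            exact ⟨y, h1, rfl⟩
          · rintro ⟨z, hz, rfl⟩
            exact ⟨hz, fun hp => hxu hp.1, fun hp => hxv hp.1⟩
      rw [degree, hnfs, Finset.card_image_of_injective _ (Option.some_injective V), degree]

omit [DecidableRel G.Adj] in
lemma subdivide_degree_none :
    (subdivide G u v).degree (none : Option V) = 2 := by
  have huv : u ≠ v := he.ne
  have hnfs : (subdivide G u v).neighborFinset none = {some u, some v} := by
    ext a
    cases a with
    | none => simp [subdivide_not_adj_none_none]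
    | some y => simp [mem_neighborFinset, subdivide_adj_none huv]
  rw [degree, hnfs]
  rw [Finset.card_insert_of_notMem (by simp [huv]), Finset.card_singleton]

end Deg

section DegC

variable {V : Type*} [Fintype V] {G : SimpleGraph V} {u v : V}

lemma degC_subdivide_some (he : G.Adj u v) (x : V) :
    degC (subdivide G u v) (some x) = degC G x := by
  classical
  exact subdivide_degree_some he x

lemma degC_subdivide_none (he : G.Adj u v) :
    degC (subdivide G u v) (none : Option V) = 2 := by
  classical
  exact subdivide_degree_none he

end DegC

section Key

variable {V : Type*} [Fintype V] {G : SimpleGraph V} {u v : V}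

lemma two_le_mp_subdivide (he : G.Adj u v) : 2 ≤ mp (subdivide G u v) := by
  have hadj : (subdivide G u v).Adj (some u) none :=
    ((subdivide_adj_none he.ne).mpr (Or.inl rfl)).symm
  have hw : (subdivide G u v).Walk (some u) none := Walk.cons hadj Walk.nil
  have hlen : (Walk.cons hadj Walk.nil).support.length = 2 := rfl
  have := le_mp (subdivide G u v) (Walk.cons hadj Walk.nil)
    (by simp [Walk.isPath_def]) ?_
  · rwa [hlen] at this
  · have hsup : (Walk.cons hadj Walk.nil).support = [some u, none] := rfl
    rw [hsup]
    rcases le_total (degC (subdivide G u v) (some u)) (degC (subdivide G u v) none) with h | h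
    · exact Or.inl (by simpa [List.Chain', List.isChain_pair] using h)
    · exact Or.inr (by simpa [List.Chain', List.isChain_pair] using h)

lemma key (he : G.Adj u v) {x y : V} (p : G.Walk x y) (hp : p.IsPath)
    (hc : List.Chain' (· ≤ ·) (p.support.map (degC G))) :
    ∃ k, p.support.length + 1 ≤ 2 * k ∧ k ≤ mp (subdivide G u v) := by
  by_cases hedge : s(u, v) ∈ p.edges
  swap
  · refine ⟨p.support.length, ?_, ?_⟩
    · have : 1 ≤ p.support.length := List.length_pos_iff.mpr p.support_ne_nil
      omega
    · have hlift := le_mp (subdivide G u v) (liftWalk p hedge)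
        (isPath_liftWalk p hedge hp) ?_
      · rwa [support_liftWalk, List.length_map] at hlift
      · left
        rw [support_liftWalk, List.map_map]
        have hfeq : degC (subdivide G u v) ∘ some = degC G :=
          funext fun z => degC_subdivide_some he z
        rwa [hfeq]
  · obtain ⟨d, hd, hde⟩ := List.mem_map.mp hedge
    have hde' : s(d.fst, d.snd) = s(u, v) := hde
    obtain ⟨q1, q2, hsupp, hq1, hq2, he1, he2⟩ := split_at_dart p hp hd
    have hlen : q1.support.length + q2.support.length = p.support.length := by
      rw [hsupp, List.length_append]
    have hcq : List.Chain' (· ≤ ·)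
        (q1.support.map (degC G) ++ q2.support.map (degC G)) := by
      rwa [← List.map_append, ← hsupp]
    have hc1 : List.Chain' (· ≤ ·) (q1.support.map (degC G)) :=
      hcq.sublist (List.sublist_append_left _ _)
    have hc2 : List.Chain' (· ≤ ·) (q2.support.map (degC G)) :=
      hcq.sublist (List.sublist_append_right _ _)
    have hjunc : degC G d.fst ≤ degC G d.snd :=
      rel_of_dart_of_chain p hc d hd
    have hbuv : d.snd = u ∨ d.snd = v := by
      have := Sym2.eq_iff.mp hde'
      tauto
    have hnb : (subdivide G u v).Adj none (some d.snd) :=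
      (subdivide_adj_none he.ne).mpr hbuv
    by_cases hb2 : 2 ≤ degC G d.snd
    · -- two candidates q1 and none::q2
      have hk1 : q1.support.length ≤ mp (subdivide G u v) := by
        have := le_mp (subdivide G u v) (liftWalk q1 (hde' ▸ he1))
          (isPath_liftWalk q1 _ hq1) ?_
        · rwa [support_liftWalk, List.length_map] at this
        · left
          rw [support_liftWalk, List.map_map]
          have hfeq : degC (subdivide G u v) ∘ some = degC G :=
            funext fun z => degC_subdivide_some he z
          rwa [hfeq]
      have hk2 : q2.support.length + 1 ≤ mp (subdivide G u v) := by
        have hpath : (Walk.cons hnb (liftWalk q2 (hde' ▸ he2))).IsPath := by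
          rw [Walk.cons_isPath_iff]
          refine ⟨isPath_liftWalk q2 _ hq2, ?_⟩
          rw [support_liftWalk]
          simp
        have := le_mp (subdivide G u v) (Walk.cons hnb (liftWalk q2 (hde' ▸ he2)))
          hpath ?_
        · rwa [Walk.support_cons, List.length_cons, support_liftWalk,
            List.length_map] at this
        · left
          rw [Walk.support_cons, List.map_cons, support_liftWalk, List.map_map]
          have hfeq : degC (subdivide G u v) ∘ some = degC G :=
            funext fun z => degC_subdivide_some he z
          rw [hfeq, List.Chain', List.isChain_cons, degC_subdivide_none he]
          constructor
          · intro b hb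
            rw [q2.support_eq_cons] at hb
            simp only [List.map_cons, List.head?_cons, Option.mem_def,
              Option.some.injEq] at hb
            rw [← hb]
            exact hb2
          · exact hc2
      by_cases hcase : p.support.length + 1 ≤ 2 * q1.support.length
      · exact ⟨q1.support.length, hcase, hk1⟩
      · exact ⟨q2.support.length + 1, by omega, hk2⟩
    · -- deg d.snd ≤ 1 : the path is short
      refine ⟨2, ?_, two_le_mp_subdivide he⟩
      -- show p.support.length ≤ 3
      letI : DecidableEq V := Classical.decEq _
      letI : DecidableRel G.Adj := Classical.decRel _
      have hdeg : degC G d.snd = (G.neighborFinset d.snd).card := rfl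
      have hcard : (G.neighborFinset d.snd).card ≤ 1 := by omega
      have hadj_ab : G.Adj d.fst d.snd := d.adj
      have hnodup : (q1.support ++ q2.support).Nodup := by
        rw [← hsupp]; exact hp.support_nodup
      have hdisj := (List.nodup_append.mp hnodup).2.2
      -- q2 is nil
      have hq2len : q2.support.length = 1 := by
        cases q2 with
        | nil => rfl
        | cons h' t =>
          exfalso
          rename_i z
          have hz : z ∈ G.neighborFinset d.snd := by simpa using h'
          have ha : d.fst ∈ G.neighborFinset d.snd := by simpa using hadj_ab.symm
          have hza : z = d.fst := by
            have := Finset.card_le_one.mp hcard z hz d.fst ha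
            exact this
          have hmem2 : d.fst ∈ (Walk.cons h' t).support := by
            rw [Walk.support_cons]
            right
            rw [← hza]
            exact t.start_mem_support
          exact hdisj _ q1.end_mem_support _ hmem2 rfl
      -- q1 is short
      have hq1len : q1.support.length ≤ 2 := by
        by_contra hlong
        push_neg at hlong
        obtain ⟨x0, x1, x2, rest, hsup3⟩ :
            ∃ x0 x1 x2 rest, q1.support = x0 :: x1 :: x2 :: rest := by
          match hsq : q1.support with
          | [] => rw [hsq] at hlong; simp at hlong
          | [a] => rw [hsq] at hlong; simp at hlong
          | [a, b] => rw [hsq] at hlong; simp at hlong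
          | a :: b :: c :: r => exact ⟨a, b, c, r, rfl⟩
        -- x1 has two distinct neighbors x0 and x2
        have hchsup : List.Chain' G.Adj q1.support := q1.isChain_adj_support
        rw [hsup3] at hchsup
        have hadj01 : G.Adj x0 x1 := (List.isChain_cons_cons.mp hchsup).1
        have hadj12 : G.Adj x1 x2 := (List.isChain_cons_cons.mp (List.isChain_cons_cons.mp hchsup).2).1
        have hnodup1 : q1.support.Nodup := hq1.support_nodup
        rw [hsup3] at hnodup1
        have hx02 : x0 ≠ x2 := by
          intro hcon
          rw [List.nodup_cons] at hnodup1
          exact hnodup1.1 (by rw [hcon]; simp)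
        have hdeg1 : 2 ≤ (G.neighborFinset x1).card := by
          have hsub : {x0, x2} ⊆ G.neighborFinset x1 := by
            intro z hz
            simp only [Finset.mem_insert, Finset.mem_singleton] at hz
            rcases hz with rfl | rfl
            · simpa using hadj01.symm
            · simpa using hadj12
          calc 2 = ({x0, x2} : Finset V).card := by
                rw [Finset.card_insert_of_notMem (by simpa using hx02),
                  Finset.card_singleton]
            _ ≤ _ := Finset.card_le_card hsub
        -- but deg x1 ≤ deg d.snd ≤ 1 by pairwise monotonicity
        have hpw : List.Pairwise (· ≤ ·)
            (q1.support.map (degC G) ++ q2.support.map (degC G)) :=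
          List.isChain_iff_pairwise.mp hcq
        have hle : degC G x1 ≤ degC G d.snd := by
          refine (List.pairwise_append.mp hpw).2.2 _ ?_ _ ?_
          · rw [hsup3]; simp
          · rw [q2.support_eq_cons]; simp
            exact ⟨_, q2.start_mem_support, rfl⟩
        have : degC G x1 = (G.neighborFinset x1).card := rfl
        omega
      omega

end Key

theorem mp_subdivide_ge {V : Type*} [Fintype V] (G : SimpleGraph V) (u v : V)
    (he : G.Adj u v) :
    ⌈((mp G : ℚ) + 1) / 2⌉ ≤ (mp (subdivide G u v) : ℤ) := by
  -- mp G is attained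
  have hne : (mpSet G).Nonempty := by
    refine ⟨1, u, u, Walk.nil, Walk.IsPath.nil, ?_, rfl⟩
    left
    exact List.isChain_singleton _
  have hmem : mp G ∈ mpSet G := by
    rw [mp_eq_sSup]
    exact Nat.sSup_mem hne (bddAbove_mpSet G)
  obtain ⟨x, y, p, hp, hcor, hlen⟩ := hmem
  have hkey : ∃ k, mp G + 1 ≤ 2 * k ∧ k ≤ mp (subdivide G u v) := by
    rcases hcor with hc | hc
    · obtain ⟨k, hk1, hk2⟩ := key he p hp hc
      exact ⟨k, by omega, hk2⟩
    · have hrc : List.Chain' (· ≤ ·) (p.reverse.support.map (degC G)) := by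
        rw [Walk.support_reverse, List.map_reverse]
        exact List.isChain_reverse.mpr hc
      obtain ⟨k, hk1, hk2⟩ := key he p.reverse (hp.reverse) hrc
      rw [Walk.support_reverse, List.length_reverse] at hk1
      exact ⟨k, by omega, hk2⟩
  obtain ⟨k, hk1, hk2⟩ := hkey
  have h1 : ((mp G : ℚ) + 1) / 2 ≤ (k : ℚ) := by
    rw [div_le_iff₀ (by norm_num : (0:ℚ) < 2)]
    have : (mp G : ℚ) + 1 ≤ 2 * (k : ℚ) := by exact_mod_cast hk1
    linarith
  have h2 : (⌈((mp G : ℚ) + 1) / 2⌉ : ℤ) ≤ (k : ℤ) := Int.ceil_le.mpr (by exact_mod_cast h1)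
  exact h2.trans (by exact_mod_cast hk2)
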